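/- Let φ(d,e,n) := C(d+n, n) − C(d−2e+n, n) − (n+1)·C(e+n, n) + (n+1), regarded as an integer. Then for all integers d, e, n with d ≥ 2e, e ≥ 3 and n ≥ 3, one has φ(d,e,n) ≥ 0. -/

import Mathlib

open Finset Finset.Nat

lemma key_ineq (e k : ℕ) (he : 3 ≤ e) :
    (k + 3 + 1) * (e + (k + 3)).choose (k + 3) ≤ (2 * e + (k + 3)).choose (k + 3) := by
  set n := k + 3 with hnn
  have hvdm := Nat.add_choose_eq (e + n) e n
  have h2en : 2 * e + n = (e + n) + e := by ring
  rw [h2en, hvdm]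
  set A := (e + n).choose n with hA
  set B := (e + n).choose (k + 2) with hB
  set D := (e + n).choose (k + 1) with hD
  have hsub : ({(n, 0), (k + 2, 1), (k + 1, 2)} : Finset (ℕ × ℕ)) ⊆ antidiagonal n := by
    intro p hp
    simp only [Finset.mem_insert, Finset.mem_singleton] at hp
    rcases hp with rfl | rfl | rfl <;> simp [HasAntidiagonal.mem_antidiagonal, hnn]
  have hle := Finset.sum_le_sum_of_subset_of_nonneg hsub
    (fun i _ _ => Nat.zero_le ((e + n).choose i.1 * e.choose i.2))
  have hsum : ∑ ij ∈ ({(n, 0), (k + 2, 1), (k + 1, 2)} : Finset (ℕ × ℕ)),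
      (e + n).choose ij.1 * e.choose ij.2 = A * 1 + (B * e + D * e.choose 2) := by
    rw [Finset.sum_insert (by simp [hnn]), Finset.sum_insert (by simp), Finset.sum_singleton]
    simp [hA, hB, hD]
  refine le_trans ?_ hle
  rw [hsum]
  have h1 : A * (k + 3) = B * (e + 1) := by
    have := Nat.choose_succ_right_eq (e + n) (k + 2)
    have h' : e + n - (k + 2) = e + 1 := by omega
    rw [h'] at this
    simpa [hA, hB, hnn] using this
  have h2 : B * (k + 2) = D * (e + 2) := by
    have := Nat.choose_succ_right_eq (e + n) (k + 1)
    have h' : e + n - (k + 1) = e + 2 := by omega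
    rw [h'] at this
    simpa [hB, hD, hnn] using this
  obtain ⟨j, rfl⟩ : ∃ j, e = j + 3 := ⟨e - 3, by omega⟩
  have h3 : (j + 3).choose 2 * 2 = (j + 3) * (j + 2) := by
    rw [Nat.choose_two_right]
    have : j + 3 - 1 = j + 2 := by omega
    rw [this]
    refine Nat.div_mul_cancel ?_
    rw [mul_comm]
    exact (Nat.even_mul_succ_self (j + 2)).two_dvd
  have hDpos : 1 ≤ D := Nat.choose_pos (by omega)
  have hBle : B ≤ D * (j + 3).choose 2 := by
    have h4 : B * ((k + 2) * 2) ≤ D * (j + 3).choose 2 * ((k + 2) * 2) := by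
      calc B * ((k + 2) * 2) = D * (j + 3 + 2) * 2 := by rw [← mul_assoc, h2]
        _ ≤ D * ((j + 3) * (j + 2) * (k + 2)) := by
            have : (j + 3 + 2) * 2 ≤ (j + 3) * (j + 2) * (k + 2) := by nlinarith
            calc D * (j + 3 + 2) * 2 = D * ((j + 3 + 2) * 2) := by ring
              _ ≤ D * ((j + 3) * (j + 2) * (k + 2)) := Nat.mul_le_mul_left D this
        _ = D * (j + 3).choose 2 * ((k + 2) * 2) := by rw [← h3]; ring
    exact Nat.le_of_mul_le_mul_right h4 (by positivity)
  nlinarith [h1, hBle]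

lemma nat_main (m e k : ℕ) (he : 3 ≤ e) :
    (m + (k + 3)).choose (k + 3) + (k + 3 + 1) * (e + (k + 3)).choose (k + 3)
      ≤ (2 * e + m + (k + 3)).choose (k + 3) + (k + 3 + 1) := by
  induction m with
  | zero =>
    have := key_ineq e k he
    simpa using by omega
  | succ m ih =>
    have e1 : m + 1 + (k + 3) = (m + (k + 3)) + 1 := by omega
    have e2 : 2 * e + (m + 1) + (k + 3) = (2 * e + m + (k + 3)) + 1 := by omega
    rw [e1, e2]
    rw [show k + 3 = (k + 2) + 1 from rfl, Nat.choose_succ_succ, Nat.choose_succ_succ]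
    have hmono : (m + (k + 3)).choose (k + 2) ≤ (2 * e + m + (k + 3)).choose (k + 2) :=
      Nat.choose_le_choose _ (by omega)
    simp only [Nat.succ_eq_add_one, show k + 2 + 1 = k + 3 from rfl] at *
    omega

/-- φ(d,e,n) = C(d+n,n) − C(d−2e+n,n) − (n+1)·C(e+n,n) + (n+1), as an integer. -/
def phi (d e n : ℕ) : ℤ :=
  ((d + n).choose n : ℤ) - ((d - 2 * e + n).choose n : ℤ)
    - (n + 1) * ((e + n).choose n : ℤ) + (n + 1)

theorem stmt_0 (d e n : ℕ) (hd : 2 * e ≤ d) (he : 3 ≤ e) (hn : 3 ≤ n) :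
    0 ≤ phi d e n := by
  obtain ⟨k, rfl⟩ : ∃ k, n = k + 3 := ⟨n - 3, by omega⟩
  obtain ⟨m, rfl⟩ : ∃ m, d = 2 * e + m := ⟨d - 2 * e, by omega⟩
  have hsub : 2 * e + m - 2 * e = m := by omega
  have h := nat_main m e k he
  unfold phi
  rw [hsub]
  push_cast at h ⊢
  linarith
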